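/- Let G be a probability measure on ℝ supported in an interval of length R, and let Ĝ_n be the empirical measure of n i.i.d. samples from G. Then E[W_1(G, Ĝ_n)] ≤ R·√(π/(2n)). -/

import Mathlib

open MeasureTheory Set Filter ProbabilityTheory
open scoped ENNReal Topology

/-- The p-th power of the p-Wasserstein distance, defined as the infimum of transport
costs over all couplings.  For `p = 1` this is the 1-Wasserstein distance. -/
noncomputable def WpPow {E : Type*} [NormedAddCommGroup E] [MeasurableSpace E]
    (p : ℝ) (μ ν : Measure E) : ℝ :=
  sInf {c : ℝ | ∃ γ : Measure (E × E),
    γ.map Prod.fst = μ ∧ γ.map Prod.snd = ν ∧ c = ∫ z, ‖z.1 - z.2‖ ^ p ∂γ}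

/-- The empirical measure of the sample points `X 0 ω, …, X (n-1) ω`. -/
noncomputable def empiricalMeasure {Ω : Type*} [MeasurableSpace Ω] {n : ℕ}
    (X : Fin n → Ω → ℝ) (ω : Ω) : Measure ℝ :=
  ((n : ℝ≥0∞)⁻¹) • ∑ i, Measure.dirac (X i ω)

section helpers

/-- Quantile function (generalized inverse cdf). -/
noncomputable def qf (μ : Measure ℝ) (t : ℝ) : ℝ :=
  sInf {x | t ≤ ProbabilityTheory.cdf μ x}

variable (μ : Measure ℝ) [IsProbabilityMeasure μ]

lemma qf_set_nonempty {t : ℝ} (ht : t < 1) : {x | t ≤ cdf μ x}.Nonempty := by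
  obtain ⟨x, hx⟩ := ((tendsto_cdf_atTop μ).eventually (eventually_ge_nhds ht)).exists
  exact ⟨x, hx⟩

lemma qf_set_bddBelow {t : ℝ} (ht : 0 < t) : BddBelow {x | t ≤ cdf μ x} := by
  obtain ⟨y, hy⟩ := ((tendsto_cdf_atBot μ).eventually (eventually_lt_nhds ht)).exists
  refine ⟨y, fun x hx => ?_⟩
  by_contra h
  push_neg at h
  exact absurd (hx.trans (monotone_cdf μ h.le)) (not_le.2 hy)

lemma qf_le_iff {t x : ℝ} (ht : 0 < t) (ht1 : t < 1) :
    qf μ t ≤ x ↔ t ≤ cdf μ x := by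
  constructor
  · intro h
    have hy : ∀ y, x < y → t ≤ cdf μ y := by
      intro y hy
      obtain ⟨s, hs, hs'⟩ := exists_lt_of_csInf_lt (qf_set_nonempty μ ht1) (lt_of_le_of_lt h hy)
      exact le_trans hs (monotone_cdf μ hs'.le)
    have hc : Tendsto (cdf μ) (𝓝[>] x) (𝓝 (cdf μ x)) :=
      ((cdf μ).right_continuous x).mono_left (nhdsWithin_mono x Ioi_subset_Ici_self)
    exact ge_of_tendsto hc (eventually_nhdsWithin_of_forall fun y hy' => hy y hy')
  · intro h
    exact csInf_le (qf_set_bddBelow μ ht) h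

lemma qf_monotoneOn : MonotoneOn (qf μ) (Ioo 0 1) := by
  intro t ht t' ht' htt'
  exact csInf_le_csInf (qf_set_bddBelow μ ht.1) (qf_set_nonempty μ ht'.2)
    (fun x hx => le_trans htt' hx)

lemma qf_aemeasurable : AEMeasurable (qf μ) (volume.restrict (Ioo (0:ℝ) 1)) :=
  aemeasurable_restrict_of_monotoneOn measurableSet_Ioo (qf_monotoneOn μ)

lemma qf_map : (volume.restrict (Ioo (0:ℝ) 1)).map (qf μ) = μ := by
  refine Measure.ext_of_Iic _ _ (fun x => ?_)
  rw [Measure.map_apply_of_aemeasurable (qf_aemeasurable μ) measurableSet_Iic,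
    Measure.restrict_apply₀' measurableSet_Ioo.nullMeasurableSet]
  have hset_le : qf μ ⁻¹' Iic x ∩ Ioo 0 1 ⊆ Ioc 0 (cdf μ x) := by
    rintro t ⟨ht1, ht2⟩
    exact ⟨ht2.1, (qf_le_iff μ ht2.1 ht2.2).1 ht1⟩
  have hset_ge : Ioo 0 (cdf μ x) ⊆ qf μ ⁻¹' Iic x ∩ Ioo 0 1 := by
    rintro t ⟨ht1, ht2⟩
    have ht2' : t < 1 := lt_of_lt_of_le ht2 (cdf_le_one μ x)
    exact ⟨(qf_le_iff μ ht1 ht2').2 ht2.le, ht1, ht2'⟩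
  refine le_antisymm ?_ ?_
  · calc volume (qf μ ⁻¹' Iic x ∩ Ioo 0 1) ≤ volume (Ioc 0 (cdf μ x)) := measure_mono hset_le
      _ = ENNReal.ofReal (cdf μ x) := by rw [Real.volume_Ioc, sub_zero]
      _ = μ (Iic x) := ofReal_cdf μ x
  · calc μ (Iic x) = ENNReal.ofReal (cdf μ x) := (ofReal_cdf μ x).symm
      _ = volume (Ioo 0 (cdf μ x)) := by rw [Real.volume_Ioo, sub_zero]
      _ ≤ _ := measure_mono hset_ge


lemma mem_Ico_min_max_iff_xor (c d x : ℝ) :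
    x ∈ Ico (min c d) (max c d) ↔ ((c ≤ x ∧ ¬ d ≤ x) ∨ (d ≤ x ∧ ¬ c ≤ x)) := by
  simp only [mem_Ico, min_le_iff, lt_iff_not_ge, max_le_iff]
  tauto

lemma mem_uIoc_iff_xor (c d t : ℝ) :
    t ∈ uIoc c d ↔ ((t ≤ c ∧ ¬ t ≤ d) ∨ (t ≤ d ∧ ¬ t ≤ c)) := by
  simp only [uIoc, mem_Ioc, lt_iff_not_ge, le_inf_iff, le_sup_iff]
  tauto

lemma max_sub_min_abs (c d : ℝ) : max c d - min c d = |c - d| := by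
  rw [max_sub_min_eq_abs, abs_sub_comm]

lemma volume_Ico_min_max (c d : ℝ) :
    volume (Ico (min c d) (max c d)) = ENNReal.ofReal |c - d| := by
  rw [Real.volume_Ico, max_sub_min_abs]

lemma volume_Ioo01_inter_uIoc {c d : ℝ} (hc : 0 ≤ c) (hc1 : c ≤ 1) (hd : 0 ≤ d) (hd1 : d ≤ 1) :
    volume (Ioo (0:ℝ) 1 ∩ uIoc c d) = ENNReal.ofReal |c - d| := by
  have h1 : Ioo (min c d) (max c d) ⊆ Ioo (0:ℝ) 1 ∩ uIoc c d := by
    rintro t ⟨ht1, ht2⟩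
    exact ⟨⟨lt_of_le_of_lt (le_min hc hd) ht1, lt_of_lt_of_le ht2 (max_le hc1 hd1)⟩,
      ht1, ht2.le⟩
  have h2 : Ioo (0:ℝ) 1 ∩ uIoc c d ⊆ Ioc (min c d) (max c d) := fun t ht => ht.2
  refine le_antisymm ?_ ?_
  · refine le_trans (measure_mono h2) ?_
    rw [Real.volume_Ioc, max_sub_min_abs]
  · refine le_trans (le_of_eq ?_) (measure_mono h1)
    rw [Real.volume_Ioo, max_sub_min_abs]

lemma qf_lintegral_eq (μ ν : Measure ℝ) [IsProbabilityMeasure μ] [IsProbabilityMeasure ν] :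
    ∫⁻ t in Ioo (0:ℝ) 1, ENNReal.ofReal |qf μ t - qf ν t| ∂volume
      = ∫⁻ x, ENNReal.ofReal |cdf μ x - cdf ν x| ∂volume := by
  have hm1 := qf_aemeasurable μ
  have hm2 := qf_aemeasurable ν
  set g1 := hm1.mk (qf μ) with hg1def
  set g2 := hm2.mk (qf ν) with hg2def
  have hg1 : Measurable g1 := hm1.measurable_mk
  have hg2 : Measurable g2 := hm2.measurable_mk
  have he1 : ∀ᵐ t ∂(volume : Measure ℝ), t ∈ Ioo (0:ℝ) 1 → qf μ t = g1 t :=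
    ae_imp_of_ae_restrict hm1.ae_eq_mk
  have he2 : ∀ᵐ t ∂(volume : Measure ℝ), t ∈ Ioo (0:ℝ) 1 → qf ν t = g2 t :=
    ae_imp_of_ae_restrict hm2.ae_eq_mk
  set A : Set (ℝ × ℝ) := {p | g1 p.1 ≤ p.2} with hAdef
  set B : Set (ℝ × ℝ) := {p | g2 p.1 ≤ p.2} with hBdef
  have hA : MeasurableSet A := measurableSet_le (hg1.comp measurable_fst) measurable_snd
  have hB : MeasurableSet B := measurableSet_le (hg2.comp measurable_fst) measurable_snd
  set E : Set (ℝ × ℝ) := (Ioo (0:ℝ) 1 ×ˢ univ) ∩ ((A \ B) ∪ (B \ A)) with hEdef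
  have hE : MeasurableSet E :=
    (measurableSet_Ioo.prod MeasurableSet.univ).inter ((hA.diff hB).union (hB.diff hA))
  have hEmem : ∀ p : ℝ × ℝ, p ∈ E ↔ p.1 ∈ Ioo (0:ℝ) 1 ∧
      ((g1 p.1 ≤ p.2 ∧ ¬ g2 p.1 ≤ p.2) ∨ (g2 p.1 ≤ p.2 ∧ ¬ g1 p.1 ≤ p.2)) := by
    intro p
    simp only [hEdef, hAdef, hBdef, mem_inter_iff, mem_prod, mem_univ, and_true,
      mem_union, mem_diff, mem_setOf_eq]
  have hside1 : ((volume.restrict (Ioo (0:ℝ) 1)).prod volume) E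
      = ∫⁻ t in Ioo (0:ℝ) 1, ENNReal.ofReal |qf μ t - qf ν t| ∂volume := by
    rw [Measure.prod_apply hE]
    refine lintegral_congr_ae ?_
    filter_upwards [ae_restrict_mem measurableSet_Ioo,
      ae_restrict_of_ae he1, ae_restrict_of_ae he2] with t ht h1 h2
    have hset : Prod.mk t ⁻¹' E
        = Ico (min (qf μ t) (qf ν t)) (max (qf μ t) (qf ν t)) := by
      ext x
      rw [mem_preimage, hEmem, mem_Ico_min_max_iff_xor]
      simp [ht, h1 ht, h2 ht]
    rw [hset, volume_Ico_min_max]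
  have hside2 : ((volume.restrict (Ioo (0:ℝ) 1)).prod volume) E
      = ∫⁻ x, ENNReal.ofReal |cdf μ x - cdf ν x| ∂volume := by
    rw [Measure.prod_apply_symm hE]
    refine lintegral_congr fun x => ?_
    rw [Measure.restrict_apply₀' measurableSet_Ioo.nullMeasurableSet]
    have hcongr : ((fun t => (t, x)) ⁻¹' E ∩ Ioo 0 1 : Set ℝ)
        =ᵐ[volume] (Ioo (0:ℝ) 1 ∩ Set.uIoc (cdf μ x) (cdf ν x) : Set ℝ) := by
      rw [eventuallyEq_set]
      filter_upwards [he1, he2] with t h1 h2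
      by_cases ht : t ∈ Ioo (0:ℝ) 1
      · simp only [mem_inter_iff, mem_preimage, hEmem, ht, and_true, true_and,
          mem_uIoc_iff_xor]
        rw [← h1 ht, ← h2 ht, qf_le_iff μ ht.1 ht.2, qf_le_iff ν ht.1 ht.2]
      · simp [ht]
    rw [measure_congr hcongr,
      volume_Ioo01_inter_uIoc (cdf_nonneg μ x) (cdf_le_one μ x) (cdf_nonneg ν x)
        (cdf_le_one ν x)]
  rw [← hside1, hside2]

lemma WpPow_nonneg {E : Type*} [NormedAddCommGroup E] [MeasurableSpace E]
    (p : ℝ) (μ ν : Measure E) : 0 ≤ WpPow p μ ν := by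
  refine Real.sInf_nonneg (fun c hc => ?_)
  obtain ⟨γ, -, -, rfl⟩ := hc
  exact integral_nonneg fun z => Real.rpow_nonneg (norm_nonneg _) _

lemma WpPow_le_cdf_dist (μ ν : Measure ℝ) [IsProbabilityMeasure μ] [IsProbabilityMeasure ν] :
    WpPow 1 μ ν ≤ (∫⁻ x, ENNReal.ofReal |cdf μ x - cdf ν x| ∂volume).toReal := by
  have hpair : AEMeasurable (fun t => (qf μ t, qf ν t)) (volume.restrict (Ioo (0:ℝ) 1)) :=
    (qf_aemeasurable μ).prodMk (qf_aemeasurable ν)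
  set γ : Measure (ℝ × ℝ) :=
    (volume.restrict (Ioo (0:ℝ) 1)).map (fun t => (qf μ t, qf ν t)) with hγdef
  have hcont : Continuous (fun z : ℝ × ℝ => ‖z.1 - z.2‖ ^ (1:ℝ)) := by
    refine Continuous.rpow_const ((continuous_fst.sub continuous_snd).norm) ?_
    exact fun x => Or.inr zero_le_one
  have hfst : γ.map Prod.fst = μ := by
    rw [hγdef, AEMeasurable.map_map_of_aemeasurable measurable_fst.aemeasurable hpair]
    exact qf_map μ
  have hsnd : γ.map Prod.snd = ν := by
    rw [hγdef, AEMeasurable.map_map_of_aemeasurable measurable_snd.aemeasurable hpair]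
    exact qf_map ν
  have hint : (∫ z, ‖z.1 - z.2‖ ^ (1:ℝ) ∂γ)
      = ∫ t in Ioo (0:ℝ) 1, |qf μ t - qf ν t| := by
    rw [hγdef, integral_map hpair hcont.aestronglyMeasurable]
    simp [Real.rpow_one, Real.norm_eq_abs]
  have hmem : (∫ t in Ioo (0:ℝ) 1, |qf μ t - qf ν t|) ∈
      {c : ℝ | ∃ γ : Measure (ℝ × ℝ),
        γ.map Prod.fst = μ ∧ γ.map Prod.snd = ν ∧ c = ∫ z, ‖z.1 - z.2‖ ^ (1:ℝ) ∂γ} :=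
    ⟨γ, hfst, hsnd, hint.symm⟩
  have hbdd : BddBelow {c : ℝ | ∃ γ : Measure (ℝ × ℝ),
      γ.map Prod.fst = μ ∧ γ.map Prod.snd = ν ∧ c = ∫ z, ‖z.1 - z.2‖ ^ (1:ℝ) ∂γ} := by
    refine ⟨0, fun c hc => ?_⟩
    obtain ⟨γ', -, -, rfl⟩ := hc
    exact integral_nonneg fun z => Real.rpow_nonneg (norm_nonneg _) _
  have hle : WpPow 1 μ ν ≤ ∫ t in Ioo (0:ℝ) 1, |qf μ t - qf ν t| := csInf_le hbdd hmem
  refine hle.trans (le_of_eq ?_)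
  rw [integral_eq_lintegral_of_nonneg_ae (f := fun t => |qf μ t - qf ν t|) (Eventually.of_forall fun t => abs_nonneg _)
    (((qf_aemeasurable μ).sub (qf_aemeasurable ν)).norm).aestronglyMeasurable]
  rw [qf_lintegral_eq μ ν]

variable {Ω : Type*} [MeasurableSpace Ω] {n : ℕ}

lemma empirical_isProb (hn : 0 < n) (X : Fin n → Ω → ℝ) (ω : Ω) :
    IsProbabilityMeasure (empiricalMeasure X ω) := by
  constructor
  have hn' : (n : ℝ≥0∞) ≠ 0 := by exact_mod_cast hn.ne'
  simp only [empiricalMeasure, Measure.smul_apply, Measure.coe_finset_sum, Finset.sum_apply,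
    Measure.dirac_apply' _ MeasurableSet.univ, mem_univ, indicator_of_mem, Pi.one_apply,
    Finset.sum_const, Finset.card_univ, Fintype.card_fin, nsmul_eq_mul, smul_eq_mul]
  rw [mul_one]
  exact ENNReal.inv_mul_cancel hn' (ENNReal.natCast_ne_top n)

lemma cdf_empirical (hn : 0 < n) (X : Fin n → Ω → ℝ) (ω : Ω) (x : ℝ) :
    cdf (empiricalMeasure X ω) x
      = (n:ℝ)⁻¹ * ∑ i, (if X i ω ≤ x then (1:ℝ) else 0) := by
  haveI := empirical_isProb hn X ω
  rw [cdf_eq_real, measureReal_def]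
  have h1 : (empiricalMeasure X ω) (Iic x)
      = (n : ℝ≥0∞)⁻¹ * ∑ i, (if X i ω ≤ x then (1:ℝ≥0∞) else 0) := by
    simp only [empiricalMeasure, Measure.smul_apply, Measure.coe_finset_sum, Finset.sum_apply,
      Measure.dirac_apply' _ measurableSet_Iic, smul_eq_mul]
    congr 1
  rw [h1, ENNReal.toReal_mul, ENNReal.toReal_inv, ENNReal.toReal_natCast,
    ENNReal.toReal_sum (by intro i _; split <;> simp)]
  congr 1
  refine Finset.sum_congr rfl fun i _ => ?_
  split <;> simp

lemma avg_indicator_L1_bound (P : Measure Ω) [IsProbabilityMeasure P]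
    (hn : 0 < n) (G : Measure ℝ) [IsProbabilityMeasure G]
    (X : Fin n → Ω → ℝ) (hXm : ∀ i, Measurable (X i))
    (hiid : ProbabilityTheory.iIndepFun X P)
    (hlaw : ∀ i, P.map (X i) = G) (x : ℝ) :
    ∫ ω, |cdf G x - (n:ℝ)⁻¹ * ∑ i, (if X i ω ≤ x then (1:ℝ) else 0)| ∂P
      ≤ (2 * Real.sqrt n)⁻¹ := by
  have hn' : (n:ℝ) ≠ 0 := by exact_mod_cast hn.ne'
  have hnpos : (0:ℝ) < n := by exact_mod_cast hn
  set p : ℝ := cdf G x with hp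
  have hp0 : 0 ≤ p := cdf_nonneg G x
  have hp1 : p ≤ 1 := cdf_le_one G x
  set φ : ℝ → ℝ := fun y => (n:ℝ)⁻¹ * (if y ≤ x then 1 else 0) - p * (n:ℝ)⁻¹ with hφ
  have hφm : Measurable φ :=
    (measurable_const.mul (Measurable.ite measurableSet_Iic measurable_const
      measurable_const)).sub measurable_const
  set Z : Fin n → Ω → ℝ := fun i => φ ∘ X i with hZ
  have hZm : ∀ i, Measurable (Z i) := fun i => hφm.comp (hXm i)
  have hinv1 : (n:ℝ)⁻¹ ≤ 1 := by
    rw [inv_le_one_iff₀]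
    right; exact_mod_cast hn
  have hZbd : ∀ i ω, ‖Z i ω‖ ≤ 2 := by
    intro i ω
    rw [Real.norm_eq_abs]
    refine (abs_sub _ _).trans ?_
    have h1 : |(n:ℝ)⁻¹ * (if X i ω ≤ x then (1:ℝ) else 0)| ≤ 1 := by
      rw [abs_mul, abs_of_nonneg (by positivity : (0:ℝ) ≤ (n:ℝ)⁻¹)]
      have : |(if X i ω ≤ x then (1:ℝ) else 0)| ≤ 1 := by split <;> simp
      nlinarith [inv_nonneg.2 hnpos.le]
    have h2 : |p * (n:ℝ)⁻¹| ≤ 1 := by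
      rw [abs_mul, abs_of_nonneg hp0, abs_of_nonneg (by positivity : (0:ℝ) ≤ (n:ℝ)⁻¹)]
      nlinarith [inv_nonneg.2 hnpos.le]
    linarith
  have hmem2 : ∀ i, MemLp (Z i) 2 P := fun i =>
    MemLp.of_bound (hZm i).aestronglyMeasurable 2 (Eventually.of_forall (hZbd i))
  have hindep : Set.Pairwise ↑(Finset.univ : Finset (Fin n))
      (fun i j => IndepFun (Z i) (Z j) P) := fun i _ j _ hij =>
    (hiid.comp (fun _ => φ) (fun _ => hφm)).indepFun hij
  -- expectation of indicator
  have hEY : ∀ i, ∫ ω, (if X i ω ≤ x then (1:ℝ) else 0) ∂P = p := by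
    intro i
    have heq : (fun ω => if X i ω ≤ x then (1:ℝ) else 0)
        = (X i ⁻¹' Iic x).indicator (1 : Ω → ℝ) := by
      funext ω
      by_cases h : X i ω ≤ x <;> simp [Set.indicator_apply, mem_preimage, mem_Iic, h]
    rw [heq, integral_indicator_one ((hXm i) measurableSet_Iic), measureReal_def]
    rw [show P (X i ⁻¹' Iic x) = G (Iic x) by
      rw [← hlaw i, Measure.map_apply (hXm i) measurableSet_Iic], hp, cdf_eq_real, measureReal_def]
  have hYint : ∀ i, Integrable (fun ω => if X i ω ≤ x then (1:ℝ) else 0) P := by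
    intro i
    refine memLp_one_iff_integrable.mp (MemLp.of_bound ?_ 1 (Eventually.of_forall ?_))
    · exact (Measurable.ite ((hXm i) measurableSet_Iic) measurable_const
        measurable_const).aestronglyMeasurable
    · intro ω; rw [Real.norm_eq_abs]; split <;> simp
  have hEZ : ∀ i, ∫ ω, Z i ω ∂P = 0 := by
    intro i
    simp only [hZ, Function.comp_apply, hφ]
    rw [integral_sub ((hYint i).const_mul _) (integrable_const _), integral_const_mul, hEY,
      integral_const, probReal_univ, smul_eq_mul, one_mul]
    ring
  have hVarZ : ∀ i, variance (Z i) P = (p - p^2) * ((n:ℝ)⁻¹)^2 := by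
    intro i
    rw [variance_eq_sub (hmem2 i)]
    have hEZi := hEZ i
    have hsq : (fun ω => (Z i ω)^2)
        = fun ω => ((1 - 2*p) * (if X i ω ≤ x then (1:ℝ) else 0) + p^2) * ((n:ℝ)⁻¹)^2 := by
      funext ω
      simp only [hZ, Function.comp_apply, hφ]
      by_cases h : X i ω ≤ x <;> simp only [h, if_true, if_false] <;> ring
    have : ∫ ω, (Z i ω)^2 ∂P = ((1 - 2*p) * p + p^2) * ((n:ℝ)⁻¹)^2 := by
      rw [hsq]
      rw [integral_mul_const, integral_add ((hYint i).const_mul _) (integrable_const _),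
        integral_const_mul, hEY, integral_const, probReal_univ, smul_eq_mul,
        one_mul]
    simp only [Pi.pow_apply] at this ⊢
    rw [this, hEZi]
    ring
  set D : Ω → ℝ := ∑ i, Z i with hD
  have hDmem : MemLp D 2 P := memLp_finsetSum' _ (fun i _ => hmem2 i)
  have hED : ∫ ω, D ω ∂P = 0 := by
    rw [hD]
    rw [show (∫ ω, (∑ i, Z i) ω ∂P) = ∫ ω, ∑ i, Z i ω ∂P by
      congr 1; funext ω; simp [Finset.sum_apply]]
    rw [integral_finset_sum _ (fun i _ => (hmem2 i).integrable one_le_two)]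
    simp [hEZ]
  have hvarsum : variance D P = ∑ i : Fin n, variance (Z i) P :=
    IndepFun.variance_sum (fun i _ => hmem2 i) hindep
  have hED2 : ∫ ω, (D ω)^2 ∂P ≤ (4 * (n:ℝ))⁻¹ := by
    have h1 : ∫ ω, (D ω)^2 ∂P = variance D P := by
      have h2 := variance_eq_sub hDmem
      simp only [Pi.pow_apply] at h2
      rw [hED] at h2
      rw [h2]
      ring
    rw [h1, hvarsum]
    simp only [hVarZ, Finset.sum_const, Finset.card_univ, Fintype.card_fin, nsmul_eq_mul]
    have hple : p - p^2 ≤ 4⁻¹ := by nlinarith [sq_nonneg (p - 2⁻¹)]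
    have heq : (n:ℝ) * ((4:ℝ)⁻¹ * ((n:ℝ)⁻¹)^2) = (4 * (n:ℝ))⁻¹ := by
      rw [mul_inv]
      field_simp
    calc (n:ℝ) * ((p - p^2) * ((n:ℝ)⁻¹)^2)
        ≤ (n:ℝ) * ((4:ℝ)⁻¹ * ((n:ℝ)⁻¹)^2) := by
          refine mul_le_mul_of_nonneg_left ?_ hnpos.le
          exact mul_le_mul_of_nonneg_right hple (by positivity)
      _ = (4 * (n:ℝ))⁻¹ := heq
  have hDval : ∀ ω, |cdf G x - (n:ℝ)⁻¹ * ∑ i, (if X i ω ≤ x then (1:ℝ) else 0)| = |D ω| := by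
    intro ω
    rw [abs_sub_comm]
    congr 1
    rw [hD, Finset.sum_apply]
    simp only [hZ, Function.comp_apply, hφ]
    rw [Finset.sum_sub_distrib, ← Finset.mul_sum, Finset.sum_const, Finset.card_univ,
      Fintype.card_fin, nsmul_eq_mul]
    have : (n:ℝ) * (p * (n:ℝ)⁻¹) = p := by field_simp
    rw [this, hp]
  simp_rw [hp, hDval]
  -- Cauchy-Schwarz step
  have habs0 : 0 ≤ ∫ ω, |D ω| ∂P := integral_nonneg fun ω => abs_nonneg _
  have hCS : (∫ ω, |D ω| ∂P)^2 ≤ ∫ ω, (D ω)^2 ∂P := by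
    have hmemabs : MemLp (fun ω => |D ω|) 2 P := by
      have := hDmem.norm
      simpa [Real.norm_eq_abs] using this
    have hvd := variance_nonneg (fun ω => |D ω|) P
    rw [variance_eq_sub hmemabs] at hvd
    have h2 : (∫ ω, ((fun ω => |D ω|) ^ 2) ω ∂P) = ∫ ω, (D ω)^2 ∂P := by
      congr 1; funext ω; simp [sq_abs]
    rw [h2] at hvd
    linarith
  have hfin : (∫ ω, |D ω| ∂P)^2 ≤ (4 * (n:ℝ))⁻¹ := hCS.trans hED2
  have hsqrt4n : Real.sqrt ((4 * (n:ℝ))⁻¹) = (2 * Real.sqrt n)⁻¹ := by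
    rw [Real.sqrt_inv, Real.sqrt_mul (by norm_num : (0:ℝ) ≤ 4),
      show Real.sqrt 4 = 2 by
        rw [show (4:ℝ) = 2^2 by norm_num, Real.sqrt_sq (by norm_num : (0:ℝ) ≤ 2)]]
  calc ∫ ω, |D ω| ∂P = Real.sqrt ((∫ ω, |D ω| ∂P)^2) := (Real.sqrt_sq habs0).symm
    _ ≤ Real.sqrt ((4 * (n:ℝ))⁻¹) := Real.sqrt_le_sqrt hfin
    _ = (2 * Real.sqrt n)⁻¹ := hsqrt4n

end helpers

/-- Expected 1-Wasserstein error of the empirical measure of `n` i.i.d. samples from a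
distribution supported in an interval of length `R`. -/
theorem empirical_W1_bound {Ω : Type*} [MeasurableSpace Ω] (P : Measure Ω)
    [IsProbabilityMeasure P] (n : ℕ) (hn : 0 < n)
    (G : Measure ℝ) [IsProbabilityMeasure G]
    (R a : ℝ) (hR : 0 ≤ R) (hsupp : G (Icc a (a + R)) = 1)
    (X : Fin n → Ω → ℝ) (hXm : ∀ i, Measurable (X i))
    (hiid : ProbabilityTheory.iIndepFun X P)
    (hlaw : ∀ i, P.map (X i) = G) :
    ∫ ω, WpPow 1 G (empiricalMeasure X ω) ∂P ≤ R * Real.sqrt (Real.pi / (2 * n)) := by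
  classical
  have hn' : (n:ℝ) ≠ 0 := by exact_mod_cast hn.ne'
  have hnnonneg : (0:ℝ) ≤ n := Nat.cast_nonneg n
  set b : ℝ := a + R with hb
  set F : Ω → ℝ → ℝ := fun ω x => (n:ℝ)⁻¹ * ∑ i, (if X i ω ≤ x then (1:ℝ) else 0) with hF
  set m : Ω → ℝ := fun ω => ∫ x in Icc a b, |cdf G x - F ω x| with hm
  -- bounds on F
  have hF01 : ∀ ω x, F ω x ∈ Icc (0:ℝ) 1 := by
    intro ω x
    constructor
    · apply mul_nonneg (by positivity)
      apply Finset.sum_nonneg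
      intro i _; split <;> norm_num
    · have hsum : (∑ i : Fin n, (if X i ω ≤ x then (1:ℝ) else 0)) ≤ n := by
        calc (∑ i : Fin n, (if X i ω ≤ x then (1:ℝ) else 0)) ≤ ∑ _i : Fin n, (1:ℝ) := by
              apply Finset.sum_le_sum; intro i _; split <;> norm_num
          _ = n := by simp
      calc (n:ℝ)⁻¹ * ∑ i, (if X i ω ≤ x then (1:ℝ) else 0) ≤ (n:ℝ)⁻¹ * n :=
            mul_le_mul_of_nonneg_left hsum (by positivity)
        _ = 1 := inv_mul_cancel₀ hn'
  have habs1 : ∀ ω x, |cdf G x - F ω x| ≤ 1 := by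
    intro ω x
    have h1 := cdf_nonneg G x
    have h2 := cdf_le_one G x
    have h3 := (hF01 ω x).1
    have h4 := (hF01 ω x).2
    rw [abs_sub_le_iff]
    constructor <;> linarith
  -- cdf G facts
  have hGc : G ((Icc a b)ᶜ) = 0 := by
    rw [measure_compl measurableSet_Icc (measure_ne_top _ _), hsupp, measure_univ, tsub_self]
  have hcdfG_lt : ∀ x, x < a → cdf G x = 0 := by
    intro x hx
    rw [cdf_eq_real, measureReal_def]
    have h0 : G (Iic x) = 0 := by
      refine measure_mono_null (fun y hy => ?_) hGc
      simp only [mem_compl_iff, mem_Icc, not_and_or, not_le]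
      exact Or.inl (lt_of_le_of_lt hy hx)
    simp [h0]
  have hcdfG_ge : ∀ x, b ≤ x → cdf G x = 1 := by
    intro x hx
    rw [cdf_eq_real, measureReal_def]
    have h1 : G (Iic x) = 1 :=
      le_antisymm prob_le_one (hsupp ▸ measure_mono (fun y hy => hy.2.trans hx))
    simp [h1]
  -- good event
  have hgood : ∀ᵐ ω ∂P, ∀ i, X i ω ∈ Icc a b := by
    rw [ae_all_iff]
    intro i
    have h1 : P (X i ⁻¹' (Icc a b)) = 1 := by
      rw [← Measure.map_apply (hXm i) measurableSet_Icc, hlaw i, hsupp]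
    have hc : P ((X i ⁻¹' (Icc a b))ᶜ) = 0 := by
      rw [measure_compl ((hXm i) measurableSet_Icc) (measure_ne_top _ _), h1, measure_univ,
        tsub_self]
    exact hc
  -- joint measurability
  have hjm : Measurable (Function.uncurry fun ω x => |cdf G x - F ω x|) := by
    apply Measurable.abs
    apply Measurable.sub
    · exact (monotone_cdf G).measurable.comp measurable_snd
    · exact measurable_const.mul (Finset.measurable_sum _ fun i _ =>
        Measurable.ite (measurableSet_le ((hXm i).comp measurable_fst) measurable_snd)
          measurable_const measurable_const)
  haveI hfin_restrict : IsFiniteMeasure (volume.restrict (Icc a b)) :=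
    ⟨by rw [Measure.restrict_apply_univ]; exact measure_Icc_lt_top⟩
  -- pointwise bound
  have hWm : ∀ᵐ ω ∂P, WpPow 1 G (empiricalMeasure X ω) ≤ m ω := by
    filter_upwards [hgood] with ω hω
    haveI := empirical_isProb hn X ω
    refine (WpPow_le_cdf_dist G (empiricalMeasure X ω)).trans (le_of_eq ?_)
    have hcdfE : ∀ x, cdf (empiricalMeasure X ω) x = F ω x := fun x => cdf_empirical hn X ω x
    have hFlt : ∀ x, x < a → F ω x = 0 := by
      intro x hx
      simp only [hF]
      rw [Finset.sum_eq_zero, mul_zero]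
      intro i _
      rw [if_neg]
      exact not_le.2 (lt_of_lt_of_le hx (hω i).1)
    have hFge : ∀ x, b ≤ x → F ω x = 1 := by
      intro x hx
      simp only [hF]
      rw [Finset.sum_congr rfl (fun i _ => if_pos ((hω i).2.trans hx)), Finset.sum_const,
        Finset.card_univ, Fintype.card_fin, nsmul_eq_mul, mul_one, inv_mul_cancel₀ hn']
    have hind : (fun x => ENNReal.ofReal |cdf G x - cdf (empiricalMeasure X ω) x|)
        = (Icc a b).indicator (fun x => ENNReal.ofReal |cdf G x - F ω x|) := by
      funext x
      by_cases hx : x ∈ Icc a b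
      · rw [indicator_of_mem hx, hcdfE]
      · rw [indicator_of_notMem hx]
        rcases lt_or_ge x a with h | h
        · rw [hcdfE, hcdfG_lt x h, hFlt x h]; simp
        · have hbx : b ≤ x := le_of_not_ge fun hxb => hx ⟨h, hxb⟩
          rw [hcdfE, hcdfG_ge x hbx, hFge x hbx]; simp
      -- done
    rw [hind, lintegral_indicator measurableSet_Icc _]
    have hmeasx : Measurable fun x => |cdf G x - F ω x| := by
      apply Measurable.abs
      apply Measurable.sub
      · exact (monotone_cdf G).measurable
      · exact measurable_const.mul (Finset.measurable_sum _ fun i _ =>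
          Measurable.ite measurableSet_Ici measurable_const measurable_const)
    simp only [hm]
    rw [integral_eq_lintegral_of_nonneg_ae (Eventually.of_forall fun x => abs_nonneg _)
      hmeasx.aestronglyMeasurable.restrict]
  -- integrability of m
  have hm_meas : AEStronglyMeasurable m P :=
    (hjm.stronglyMeasurable.integral_prod_right').aestronglyMeasurable
  have hm_bd : ∀ ω, ‖m ω‖ ≤ R := by
    intro ω
    have hmx : Measurable fun x => |cdf G x - F ω x| := by
      apply Measurable.abs
      apply Measurable.sub
      · exact (monotone_cdf G).measurable
      · exact measurable_const.mul (Finset.measurable_sum _ fun i _ =>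
          Measurable.ite measurableSet_Ici measurable_const measurable_const)
    have := norm_setIntegral_le_of_norm_le_const (μ := volume) (s := Icc a b)
      (f := fun x => |cdf G x - F ω x|) measure_Icc_lt_top
      (fun x _ => by rw [Real.norm_eq_abs, abs_abs]; exact habs1 ω x)
    refine this.trans ?_
    rw [Real.volume_real_Icc, one_mul]
    have : b - a = R := by rw [hb]; ring
    rw [this, max_eq_left hR]
  have hm_int : Integrable m P :=
    Integrable.mono' (integrable_const R) hm_meas (Eventually.of_forall hm_bd)
  -- swap integrals
  have hprod_int : Integrable (Function.uncurry fun ω x => |cdf G x - F ω x|)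
      (P.prod (volume.restrict (Icc a b))) := by
    refine Integrable.mono' (integrable_const 1) hjm.aestronglyMeasurable
      (Eventually.of_forall ?_)
    rintro ⟨ω, x⟩
    rw [Function.uncurry]
    simp only [Real.norm_eq_abs, abs_abs]
    exact habs1 ω x
  have hswap : ∫ ω, m ω ∂P
      = ∫ x in Icc a b, (∫ ω, |cdf G x - F ω x| ∂P) ∂volume :=
    integral_integral_swap hprod_int
  -- inner bound
  have hinner : ∀ x, ∫ ω, |cdf G x - F ω x| ∂P ≤ (2 * Real.sqrt n)⁻¹ := fun x =>
    avg_indicator_L1_bound P hn G X hXm hiid hlaw x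
  have hinner_int : Integrable (fun x => ∫ ω, |cdf G x - F ω x| ∂P)
      (volume.restrict (Icc a b)) := hprod_int.integral_prod_right
  have hsqrtnpos : 0 ≤ (2 * Real.sqrt n)⁻¹ := by positivity
  calc ∫ ω, WpPow 1 G (empiricalMeasure X ω) ∂P
      ≤ ∫ ω, m ω ∂P :=
        integral_mono_of_nonneg (Eventually.of_forall fun ω => WpPow_nonneg 1 G _) hm_int hWm
    _ = ∫ x in Icc a b, (∫ ω, |cdf G x - F ω x| ∂P) ∂volume := hswap
    _ ≤ ∫ x in Icc a b, ((2 * Real.sqrt n)⁻¹ : ℝ) ∂volume := by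
        refine setIntegral_mono_on hinner_int (integrable_const _) measurableSet_Icc ?_
        intro x _
        exact hinner x
    _ = R * (2 * Real.sqrt n)⁻¹ := by
        rw [setIntegral_const, Real.volume_real_Icc, smul_eq_mul]
        congr 1
        have : b - a = R := by rw [hb]; ring
        rw [this, max_eq_left hR]
    _ ≤ R * Real.sqrt (Real.pi / (2 * n)) := by
        refine mul_le_mul_of_nonneg_left ?_ hR
        have h1 : ((2 * Real.sqrt n)⁻¹ : ℝ) = Real.sqrt ((4 * (n:ℝ))⁻¹) := by
          rw [Real.sqrt_inv, Real.sqrt_mul (by norm_num : (0:ℝ) ≤ 4),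
            show Real.sqrt 4 = 2 by
              rw [show (4:ℝ) = 2^2 by norm_num, Real.sqrt_sq (by norm_num : (0:ℝ) ≤ 2)]]
        rw [h1]
        refine Real.sqrt_le_sqrt ?_
        rcases Nat.eq_zero_or_pos n with h0 | hpos
        · exact absurd h0 hn.ne'
        have hnr : (0:ℝ) < n := by exact_mod_cast hpos
        have hπ : (3:ℝ) ≤ Real.pi := Real.pi_gt_three.le
        rw [div_eq_mul_inv, mul_inv, mul_inv, ← mul_assoc]
        refine mul_le_mul_of_nonneg_right ?_ (by positivity)
        rw [show Real.pi * (2:ℝ)⁻¹ = Real.pi / 2 by ring]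
        linarith
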